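/- One-step identity for natural gradient: let K ∈ S with value matrix X, N = RK − Bᵀ X A_K, and let K' = K − η·2N for a stepsize η > 0 such that K' ∈ S with value matrix X'. Then X − X' satisfies X − X' = A_{K'}ᵀ(X − X')A_{K'} + 4η Nᵀ N − 4η² Nᵀ(R + Bᵀ X B)N, and in particular if η ≤ 1/(2λₙ(R + Bᵀ X B)) and R + Bᵀ X B ⪰ 0 then X ⪰ X'. -/

import Mathlib

open Matrix
open scoped ENNReal NNReal

section Aux

open Filter

attribute [local instance] Matrix.linftyOpNormedRing Matrix.linftyOpNormedAlgebra

private lemma aux_tendsto_norm_pow {n : ℕ} (a : Matrix (Fin n) (Fin n) ℂ)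
    (h : spectralRadius ℂ a < 1) :
    Tendsto (fun k : ℕ => ‖a ^ k‖) atTop (nhds 0) := by
  obtain ⟨r, hr1, hr2⟩ := ENNReal.lt_iff_exists_nnreal_btwn.mp h
  have hg := spectrum.pow_nnnorm_pow_one_div_tendsto_nhds_spectralRadius a
  have hev : ∀ᶠ k : ℕ in atTop, ((‖a ^ k‖₊ : ℝ≥0∞) ^ (1 / (k : ℝ))) < (r : ℝ≥0∞) :=
    hg.eventually_lt_const hr1
  have hrlt : (r : ℝ) < 1 := by exact_mod_cast ENNReal.coe_lt_one_iff.mp hr2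
  have hbound : ∀ᶠ k : ℕ in atTop, ‖a ^ k‖ ≤ (r : ℝ) ^ k := by
    filter_upwards [hev, eventually_ge_atTop 1] with k hk hk1
    have hk0 : (0 : ℝ) < (k : ℝ) := by exact_mod_cast hk1
    have h1 : (‖a ^ k‖₊ : ℝ≥0∞) ≤ (r : ℝ≥0∞) ^ (k : ℝ) := by
      have h2 := ENNReal.rpow_le_rpow hk.le hk0.le
      rwa [← ENNReal.rpow_mul, one_div, inv_mul_cancel₀ hk0.ne', ENNReal.rpow_one] at h2
    have h3 : (‖a ^ k‖₊ : ℝ≥0∞) ≤ ((r ^ k : ℝ≥0) : ℝ≥0∞) := by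
      rwa [ENNReal.rpow_natCast, ← ENNReal.coe_pow] at h1
    have h4 : ‖a ^ k‖₊ ≤ r ^ k := ENNReal.coe_le_coe.mp h3
    calc ‖a ^ k‖ = ((‖a ^ k‖₊ : ℝ≥0) : ℝ) := rfl
    _ ≤ ((r ^ k : ℝ≥0) : ℝ) := by exact_mod_cast h4
    _ = (r : ℝ) ^ k := by push_cast; ring
  exact squeeze_zero' (Eventually.of_forall fun k => norm_nonneg _) hbound
    (tendsto_pow_atTop_nhds_zero_of_lt_one r.coe_nonneg hrlt)

private lemma aux_entry_le {n : ℕ} (M : Matrix (Fin n) (Fin n) ℂ) (i j : Fin n) :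
    ‖M i j‖ ≤ ‖M‖ := by
  have h1 : ‖M i j‖₊ ≤ ∑ j', ‖M i j'‖₊ :=
    Finset.single_le_sum (f := fun j' => ‖M i j'‖₊) (fun _ _ => zero_le) (Finset.mem_univ j)
  have h2 : (∑ j', ‖M i j'‖₊) ≤ Finset.univ.sup fun i => ∑ j', ‖M i j'‖₊ :=
    Finset.le_sup (f := fun i => ∑ j', ‖M i j'‖₊) (Finset.mem_univ i)
  have := Matrix.linfty_opNNNorm_def M
  have h3 : ‖M i j‖₊ ≤ ‖M‖₊ := by rw [this]; exact h1.trans h2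
  exact_mod_cast h3

/-- Powers of a Schur-stable real matrix applied to a vector tend to zero. -/
private lemma aux_pow_mulVec_tendsto {n : ℕ} (A' : Matrix (Fin n) (Fin n) ℝ)
    (hS : spectralRadius ℂ (A'.map Complex.ofReal) < 1) (x : Fin n → ℝ) :
    Tendsto (fun k : ℕ => (A' ^ k) *ᵥ x) atTop (nhds 0) := by
  set C : Matrix (Fin n) (Fin n) ℂ := A'.map Complex.ofReal with hC
  have hmap : ∀ k : ℕ, C ^ k = (A' ^ k).map Complex.ofReal := by
    intro k
    have h0 : C = Complex.ofRealHom.mapMatrix A' := rfl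
    rw [h0, ← map_pow]
    rfl
  have hnorm := aux_tendsto_norm_pow C hS
  have hentry : ∀ i j, Tendsto (fun k : ℕ => (A' ^ k) i j) atTop (nhds 0) := by
    intro i j
    refine squeeze_zero_norm (fun k => ?_) hnorm
    calc ‖(A' ^ k) i j‖ = ‖(C ^ k) i j‖ := by
          rw [hmap k, Matrix.map_apply, Complex.norm_real]
    _ ≤ ‖C ^ k‖ := aux_entry_le _ i j
  rw [tendsto_pi_nhds]
  intro i
  have : Tendsto (fun k : ℕ => ∑ j, (A' ^ k) i j * x j) atTop (nhds (∑ j : Fin n, 0)) := by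
    apply tendsto_finset_sum
    intro j _
    simpa using (hentry i j).mul_const (x j)
  simpa [mulVec, dotProduct] using this

/-- Discrete Lyapunov: if `D = A'ᵀ D A' + M` with `M ⪰ 0` and `A'` Schur, then `D ⪰ 0`. -/
private lemma aux_lyap_psd {n : ℕ} (A' D M : Matrix (Fin n) (Fin n) ℝ)
    (hD : D.IsHermitian) (hM : M.PosSemidef)
    (heq : D = A'ᵀ * D * A' + M)
    (hS : spectralRadius ℂ (A'.map Complex.ofReal) < 1) :
    D.PosSemidef := by
  refine Matrix.PosSemidef.of_dotProduct_mulVec_nonneg hD fun x => ?_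
  have step : ∀ y : Fin n → ℝ, (A' *ᵥ y) ⬝ᵥ D *ᵥ (A' *ᵥ y) ≤ y ⬝ᵥ D *ᵥ y := by
    intro y
    have h1 : y ⬝ᵥ D *ᵥ y = (A' *ᵥ y) ⬝ᵥ D *ᵥ (A' *ᵥ y) + y ⬝ᵥ M *ᵥ y := by
      conv_lhs => rw [heq]
      rw [Matrix.add_mulVec, dotProduct_add]
      congr 1
      rw [← Matrix.mulVec_mulVec, ← Matrix.mulVec_mulVec, Matrix.dotProduct_mulVec y,
        Matrix.vecMul_transpose]
    have h2 : 0 ≤ y ⬝ᵥ M *ᵥ y := by simpa using hM.dotProduct_mulVec_nonneg y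
    linarith
  have iter : ∀ k : ℕ, ((A' ^ k) *ᵥ x) ⬝ᵥ D *ᵥ ((A' ^ k) *ᵥ x) ≤ x ⬝ᵥ D *ᵥ x := by
    intro k
    induction k with
    | zero => simp
    | succ k ih =>
      have : A' ^ (k + 1) *ᵥ x = A' *ᵥ ((A' ^ k) *ᵥ x) := by
        rw [pow_succ', Matrix.mulVec_mulVec]
      rw [this]
      exact (step _).trans ih
  have hcont : Continuous fun y : Fin n → ℝ => y ⬝ᵥ D *ᵥ y := by
    simp only [dotProduct, mulVec]
    fun_prop
  have hlim : Tendsto (fun k : ℕ => ((A' ^ k) *ᵥ x) ⬝ᵥ D *ᵥ ((A' ^ k) *ᵥ x)) atTop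
      (nhds 0) := by
    have h := (hcont.tendsto 0).comp (aux_pow_mulVec_tendsto A' hS x)
    have h0 : (0 : Fin n → ℝ) ⬝ᵥ D *ᵥ (0 : Fin n → ℝ) = 0 := by simp
    rw [Function.comp_def, h0] at h
    exact h
  have : (0 : ℝ) ≤ x ⬝ᵥ D *ᵥ x := le_of_tendsto' hlim iter
  simpa using this

end Aux

private lemma aux_expandLyap {n m : ℕ} (A : Matrix (Fin n) (Fin n) ℝ)
    (B : Matrix (Fin n) (Fin m) ℝ)
    (Q : Matrix (Fin n) (Fin n) ℝ) (R : Matrix (Fin m) (Fin m) ℝ) (hR : Rᵀ = R)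
    (K ΔK : Matrix (Fin m) (Fin n) ℝ) (X : Matrix (Fin n) (Fin n) ℝ) (hX : Xᵀ = X)
    (hLyap : (A - B * K)ᵀ * X * (A - B * K) + Q + Kᵀ * R * K = X) :
    (A - B * (K + ΔK))ᵀ * X * (A - B * (K + ΔK)) + Q + (K + ΔK)ᵀ * R * (K + ΔK)
      = X + ΔKᵀ * (R * K - Bᵀ * X * (A - B * K))
          + (R * K - Bᵀ * X * (A - B * K))ᵀ * ΔK
          + ΔKᵀ * (R + Bᵀ * X * B) * ΔK := by
  have h : (A - B * (K + ΔK))ᵀ * X * (A - B * (K + ΔK)) + Q + (K + ΔK)ᵀ * R * (K + ΔK)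
      = ((A - B * K)ᵀ * X * (A - B * K) + Q + Kᵀ * R * K)
          + ΔKᵀ * (R * K - Bᵀ * X * (A - B * K))
          + (R * K - Bᵀ * X * (A - B * K))ᵀ * ΔK
          + ΔKᵀ * (R + Bᵀ * X * B) * ΔK := by
    simp only [transpose_add, transpose_sub, transpose_mul, transpose_transpose, hX, hR,
      Matrix.mul_add, Matrix.add_mul, Matrix.mul_sub, Matrix.sub_mul, Matrix.mul_assoc]
    abel
  rw [h, hLyap]

private lemma aux_one_sub_smul_psd {m : ℕ} (P : Matrix (Fin m) (Fin m) ℝ)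
    (hP : P.IsHermitian) (η : ℝ)
    (h : ∀ i, η * hP.eigenvalues i ≤ 1) : (1 - η • P).PosSemidef := by
  classical
  set U : Matrix (Fin m) (Fin m) ℝ := (hP.eigenvectorUnitary : Matrix (Fin m) (Fin m) ℝ)
    with hUdef
  have hU : U * star U = 1 := Matrix.mem_unitaryGroup_iff.mp hP.eigenvectorUnitary.2
  have key : 1 - η • P = U * diagonal (fun i => 1 - η * hP.eigenvalues i) * star U := by
    have hd : diagonal (fun i : Fin m => 1 - η * hP.eigenvalues i)
        = 1 - η • diagonal (RCLike.ofReal ∘ hP.eigenvalues) := by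
      ext i j
      by_cases hij : i = j <;>
        simp [Matrix.diagonal_apply, hij, Matrix.one_apply, Matrix.sub_apply]
    rw [hd, Matrix.mul_sub, Matrix.sub_mul, Matrix.mul_one, hU,
      Matrix.mul_smul, Matrix.smul_mul]
    conv_lhs => rw [hP.spectral_theorem, Unitary.conjStarAlgAut_apply]
  rw [key]
  have hdiag : (diagonal (fun i => 1 - η * hP.eigenvalues i)).PosSemidef :=
    Matrix.posSemidef_diagonal_iff.mpr fun i => by linarith [h i]
  simpa [Matrix.star_eq_conjTranspose] using hdiag.mul_mul_conjTranspose_same U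

/-- Spectral radius of a real square matrix, computed over ℂ. -/
noncomputable def specRad {n : ℕ} (A : Matrix (Fin n) (Fin n) ℝ) : ℝ≥0∞ :=
  spectralRadius ℂ (A.map Complex.ofReal)

/-- A real square matrix is Schur stable if its spectral radius is `< 1`. -/
def IsSchur {n : ℕ} (A : Matrix (Fin n) (Fin n) ℝ) : Prop := specRad A < 1

/-- One-step identity for the natural gradient update
`K' = K − η·2N`, `N = RK − BᵀXA_K`; and monotonicity `X ⪰ X'` for the stepsize
`η ≤ 1/(2λₙ(R + BᵀXB))` when `R + BᵀXB ⪰ 0`. -/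
theorem stmt14 {n m : ℕ} (A : Matrix (Fin n) (Fin n) ℝ) (B : Matrix (Fin n) (Fin m) ℝ)
    (Q : Matrix (Fin n) (Fin n) ℝ) (R : Matrix (Fin m) (Fin m) ℝ)
    (hQ : Qᵀ = Q) (hR : Rᵀ = R)
    (K : Matrix (Fin m) (Fin n) ℝ) (X : Matrix (Fin n) (Fin n) ℝ)
    (hX : Xᵀ = X) (hS : IsSchur (A - B * K))
    (hLyap : (A - B * K)ᵀ * X * (A - B * K) + Q + Kᵀ * R * K = X)
    (N : Matrix (Fin m) (Fin n) ℝ) (hN : N = R * K - Bᵀ * X * (A - B * K))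
    (η : ℝ) (hη : 0 < η)
    (K' : Matrix (Fin m) (Fin n) ℝ) (hK' : K' = K - (2 * η) • N)
    (X' : Matrix (Fin n) (Fin n) ℝ)
    (hX' : X'ᵀ = X') (hS' : IsSchur (A - B * K'))
    (hLyap' : (A - B * K')ᵀ * X' * (A - B * K') + Q + K'ᵀ * R * K' = X')
    (hP : (R + Bᵀ * X * B).IsHermitian) :
    X - X' = (A - B * K')ᵀ * (X - X') * (A - B * K')
        + (4 * η) • (Nᵀ * N) - (4 * η ^ 2) • (Nᵀ * (R + Bᵀ * X * B) * N) ∧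
    (η ≤ 1 / (2 * ⨆ i, hP.eigenvalues i) → (R + Bᵀ * X * B).PosSemidef →
      (X - X').PosSemidef) := by
  have hK'' : K' = K + (-(2 * η)) • N := by rw [hK', neg_smul, sub_eq_add_neg]
  have hexp := aux_expandLyap A B Q R hR K ((-(2 * η)) • N) X hX hLyap
  rw [← hK'', ← hN] at hexp
  have hexp2 : (A - B * K')ᵀ * X * (A - B * K') + Q + K'ᵀ * R * K'
      = X - (4 * η) • (Nᵀ * N) + (4 * η ^ 2) • (Nᵀ * (R + Bᵀ * X * B) * N) := by
    rw [hexp]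
    simp only [Matrix.transpose_smul, Matrix.smul_mul, Matrix.mul_smul, smul_smul]
    module
  have e3 : (A - B * K')ᵀ * X * (A - B * K')
      = (X - (4 * η) • (Nᵀ * N) + (4 * η ^ 2) • (Nᵀ * (R + Bᵀ * X * B) * N))
        - Q - K'ᵀ * R * K' := by
    rw [← hexp2]; abel
  have e2 : (A - B * K')ᵀ * X' * (A - B * K') = X' - Q - K'ᵀ * R * K' := by
    rw [eq_sub_of_add_eq (eq_sub_of_add_eq hLyap')]; abel
  have hid : X - X' = (A - B * K')ᵀ * (X - X') * (A - B * K')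
      + (4 * η) • (Nᵀ * N) - (4 * η ^ 2) • (Nᵀ * (R + Bᵀ * X * B) * N) := by
    have e1 : (A - B * K')ᵀ * (X - X') * (A - B * K')
        = ((A - B * K')ᵀ * X * (A - B * K')) - ((A - B * K')ᵀ * X' * (A - B * K')) := by
      noncomm_ring
    rw [e1, e2, e3]
    abel
  refine ⟨hid, fun hstep hPsd => ?_⟩
  -- positivity part
  set P := R + Bᵀ * X * B with hPdef
  have heig : ∀ i, η * hP.eigenvalues i ≤ 1 := by
    intro i
    set c := ⨆ j, hP.eigenvalues j with hc
    have hle : hP.eigenvalues i ≤ c := le_ciSup (Set.Finite.bddAbove (Set.finite_range _)) i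
    have hnn : 0 ≤ hP.eigenvalues i := hPsd.eigenvalues_nonneg i
    rcases le_or_gt c 0 with hc0 | hc0
    · have : hP.eigenvalues i = 0 := le_antisymm (hle.trans hc0) hnn
      simp [this]
    · have h2c : (0 : ℝ) < 2 * c := by linarith
      have : η * (2 * c) ≤ 1 := by
        have := (le_div_iff₀ h2c).mp hstep
        linarith [this]
      nlinarith
  have hMpsd : ((4 * η) • (Nᵀ * N) - (4 * η ^ 2) • (Nᵀ * P * N)).PosSemidef := by
    have h1 : (1 - η • P).PosSemidef := aux_one_sub_smul_psd P hP η heig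
    have h2 : ((4 * η) • (1 - η • P)).PosSemidef := by
      refine Matrix.PosSemidef.of_dotProduct_mulVec_nonneg ?_ fun y => ?_
      · have := h1.1
        unfold Matrix.IsHermitian at this ⊢
        rw [Matrix.conjTranspose_smul, this]
        simp
      · rw [Matrix.smul_mulVec, dotProduct_smul, smul_eq_mul]
        exact mul_nonneg (by positivity) (by simpa using h1.dotProduct_mulVec_nonneg y)
    have h3 := h2.mul_mul_conjTranspose_same Nᵀ
    have e3 : Nᵀ * ((4 * η) • (1 - η • P)) * (Nᵀ)ᴴ
        = (4 * η) • (Nᵀ * N) - (4 * η ^ 2) • (Nᵀ * P * N) := by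
      have : (Nᵀ)ᴴ = N := by
        rw [Matrix.conjTranspose_eq_transpose_of_trivial, Matrix.transpose_transpose]
      rw [this, Matrix.mul_smul, Matrix.smul_mul, Matrix.mul_sub, Matrix.sub_mul,
        Matrix.mul_one, Matrix.mul_smul, Matrix.smul_mul, smul_sub, smul_smul]
      congr 2
      ring
    rwa [e3] at h3
  have hDherm : (X - X').IsHermitian := by
    unfold Matrix.IsHermitian
    rw [Matrix.conjTranspose_eq_transpose_of_trivial, Matrix.transpose_sub, hX, hX']
  have heq' : X - X' = (A - B * K')ᵀ * (X - X') * (A - B * K')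
      + ((4 * η) • (Nᵀ * N) - (4 * η ^ 2) • (Nᵀ * P * N)) := by
    exact hid.trans (add_sub_assoc _ _ _)
  exact aux_lyap_psd (A - B * K') (X - X') _ hDherm hMpsd heq' hS'
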